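/- Let A = 15+4√14 and B = 15-4√14. For every natural number n, the quantity (1/196)·[(98+33√14)A^n + (98-33√14)B^n] + (9n/14)·[(4+√14)A^n + (4-√14)B^n] is a positive integer (i.e., it equals an integer, and is positive). -/
import Mathlib

def pq : ℕ → ℤ × ℤ
  | 0 => (1, 0)
  | n+1 => ((pq n).1 * 15 + (pq n).2 * 56, (pq n).1 * 4 + (pq n).2 * 15)

lemma pq_pos : ∀ n, 1 ≤ (pq n).1 ∧ 0 ≤ (pq n).2 := by
  intro n
  induction n with
  | zero => simp [pq]
  | succ n ih =>
    obtain ⟨h1, h2⟩ := ih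
    constructor <;> · simp only [pq]; nlinarith

lemma pq_dvd : ∀ n : ℕ, (7:ℤ) ∣ 5 * (pq n).2 + n * (pq n).1 := by
  intro n
  induction n with
  | zero => simp [pq]
  | succ n ih =>
    obtain ⟨c, hc⟩ := ih
    refine ⟨c + 5 * (pq n).1 + 18 * (pq n).2 + 2 * n * (pq n).1 + 8 * n * (pq n).2, ?_⟩
    simp only [pq]
    push_cast
    linarith [hc]

lemma pq_pow : ∀ n : ℕ,
    (15 + 4 * Real.sqrt 14) ^ n = ((pq n).1 : ℝ) + ((pq n).2 : ℝ) * Real.sqrt 14 ∧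
    (15 - 4 * Real.sqrt 14) ^ n = ((pq n).1 : ℝ) - ((pq n).2 : ℝ) * Real.sqrt 14 := by
  have h14 : Real.sqrt 14 * Real.sqrt 14 = 14 := Real.mul_self_sqrt (by norm_num)
  intro n
  induction n with
  | zero => simp [pq]
  | succ n ih =>
    obtain ⟨h1, h2⟩ := ih
    constructor
    · rw [pow_succ, h1]
      simp only [pq]
      push_cast
      linear_combination (4 * ((pq n).2 : ℝ)) * h14
    · rw [pow_succ, h2]
      simp only [pq]
      push_cast
      linear_combination (4 * ((pq n).2 : ℝ)) * h14

theorem stmt_16 :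
    ∀ n : ℕ, ∃ k : ℤ, 0 < k ∧
      (1/196 : ℝ) * ((98 + 33 * Real.sqrt 14) * (15 + 4 * Real.sqrt 14) ^ n
        + (98 - 33 * Real.sqrt 14) * (15 - 4 * Real.sqrt 14) ^ n)
      + (9 * n / 14 : ℝ) * ((4 + Real.sqrt 14) * (15 + 4 * Real.sqrt 14) ^ n
        + (4 - Real.sqrt 14) * (15 - 4 * Real.sqrt 14) ^ n) = (k : ℝ) := by
  intro n
  obtain ⟨d, hd⟩ := pq_dvd n
  obtain ⟨hp, hq⟩ := pq_pos n
  obtain ⟨h1, h2⟩ := pq_pow n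
  set p := (pq n).1
  set q := (pq n).2
  refine ⟨p + 18 * n * q + d + 4 * q + 5 * n * p, ?_, ?_⟩
  · have hn : (0:ℤ) ≤ n := Int.ofNat_nonneg n
    nlinarith [hd, hp, hq, hn, mul_nonneg hn hq, mul_nonneg hn (by linarith : (0:ℤ) ≤ p)]
  · have h14 : Real.sqrt 14 * Real.sqrt 14 = 14 := Real.mul_self_sqrt (by norm_num)
    have hdR : 5 * (q : ℝ) + (n : ℝ) * (p : ℝ) = 7 * (d : ℝ) := by exact_mod_cast hd
    rw [h1, h2]
    push_cast
    linear_combination (1/7) * hdR + (33/98 * (q:ℝ) + 9/7 * (n:ℝ) * (q:ℝ)) * h14
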